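/- arXiv:0711.4834 — 3 statements merged into one kernel-verified Lean document; each statement's English description precedes it below -/
import Mathlib

section
/- Let G be a cyclic group of order n with generator g, and P_* the standard periodic resolution with P_i free on e_i. Define Δ: P_* → P_* ⊗ P_* by its component into P_a ⊗ P_b on e_{a+b}: equal to e_a ⊗ e_b if a is even; e_a ⊗ g·e_b if a is odd and b is even; and Σ_{0 ≤ i < j < n} g^i e_a ⊗ g^j e_b if a and b are both odd. Then Δ is a chain map of complexes of F_p[G]-modules (where G acts diagonally on P_* ⊗ P_*), i.e. Δ commutes with the differentials. -/
open Finset TensorProduct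

noncomputable section

variable (p n : ℕ) (G : Type) [CommGroup G] (g : G)

/-- The group algebra `F_p[G]`; each term `P_i` of the standard periodic resolution of a
cyclic group is free of rank one over it, on the generator `e_i`. -/
abbrev GA : Type := MonoidAlgebra (ZMod p) G

/-- `g` as an element of the group algebra. -/
def ofg : GA p G := MonoidAlgebra.of (ZMod p) G g

/-- The norm element `N = 1 + g + ⋯ + g^(n-1)`. -/
def normElt : GA p G := ∑ k ∈ Finset.range n, (ofg p G g) ^ k

/-- The coefficient of the differential `d(e_i) = coef i • e_(i-1)` of the periodic
resolution: `g - 1` for `i` odd, `N` for `i` even. -/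
def coefD (i : ℕ) : GA p G := if Odd i then ofg p G g - 1 else normElt p n G g

/-- The augmentation `F_p[G] → F_p`. -/
def augGA : GA p G →ₐ[ZMod p] ZMod p := (MonoidAlgebra.lift (ZMod p) (ZMod p) G) 1

/-- The coefficient of the Cartan–Eilenberg diagonal approximation:
`Δ(e_(a+b)) = Δel a b • (e_a ⊗ e_b)` (diagonal `G`-action on the right). -/
def Δel (a b : ℕ) : GA p G ⊗[ZMod p] GA p G :=
  if Even a then 1 ⊗ₜ 1
  else if Even b then 1 ⊗ₜ ofg p G g
  else ∑ j ∈ Finset.range n, ∑ i ∈ Finset.range j, ((ofg p G g) ^ i) ⊗ₜ ((ofg p G g) ^ j)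

/-- The comultiplication `F_p[G] → F_p[G] ⊗ F_p[G]`, `h ↦ h ⊗ h`, encoding the diagonal
action of the group algebra on a tensor product. -/
def comul2 : GA p G →ₐ[ZMod p] GA p G ⊗[ZMod p] GA p G :=
  (MonoidAlgebra.lift (ZMod p) (GA p G ⊗[ZMod p] GA p G) G)
    { toFun := fun h => (MonoidAlgebra.of (ZMod p) G h) ⊗ₜ (MonoidAlgebra.of (ZMod p) G h)
      map_one' := by
        show _ ⊗ₜ _ = _
        rw [map_one]
        rfl
      map_mul' := by
        intro x y
        show _ ⊗ₜ _ = _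
        simp only [map_mul, Algebra.TensorProduct.tmul_mul_tmul] }

/-- The component `P_(a+b) → P_a ⊗ P_b` of the diagonal approximation, as the
`G`-equivariant map sending `e_(a+b)` to `Δel a b • (e_a ⊗ e_b)`. -/
def Δmap (a b : ℕ) : GA p G →ₗ[ZMod p] GA p G ⊗[ZMod p] GA p G :=
  (LinearMap.mulRight (ZMod p) (Δel p n G g a b)).comp (comul2 p G).toLinearMap

/-- Triple tensors. -/
abbrev GA3 : Type := GA p G ⊗[ZMod p] (GA p G ⊗[ZMod p] GA p G)

def comul3 : GA p G →ₐ[ZMod p] GA3 p G :=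
  (MonoidAlgebra.lift (ZMod p) (GA3 p G) G)
    { toFun := fun h => (MonoidAlgebra.of (ZMod p) G h) ⊗ₜ
        ((MonoidAlgebra.of (ZMod p) G h) ⊗ₜ (MonoidAlgebra.of (ZMod p) G h))
      map_one' := by
        show _ ⊗ₜ _ = _
        rw [map_one]
        rfl
      map_mul' := by
        intro x y
        show _ ⊗ₜ _ = _
        simp only [map_mul, Algebra.TensorProduct.tmul_mul_tmul] }

/-- The coefficient of Steenrod-style homotopy `H`:
`H(e_(a+b+c-1))`'s component in `P_a ⊗ P_b ⊗ P_c` is `Hel a b c • (e_a ⊗ e_b ⊗ e_c)`. -/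
def Hel (a b c : ℕ) : GA3 p G :=
  if Odd a ∧ Odd b ∧ Odd c then
    ∑ k ∈ Finset.range n, ∑ j ∈ Finset.range k, ∑ i ∈ Finset.range j,
      ((ofg p G g) ^ i) ⊗ₜ (((ofg p G g) ^ j) ⊗ₜ ((ofg p G g) ^ k))
  else 0

/-- Component of `(Δ ⊗ 1)Δ − (1 ⊗ Δ)Δ` at `P_a ⊗ P_b ⊗ P_c`, evaluated on `e_(a+b+c)`. -/
def coassocDefect (a b c : ℕ) : GA3 p G :=
  (TensorProduct.assoc (ZMod p) (GA p G) (GA p G) (GA p G))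
      (TensorProduct.map (Δmap p n G g a b) LinearMap.id (Δel p n G g (a + b) c))
    - TensorProduct.map LinearMap.id (Δmap p n G g b c) (Δel p n G g a (b + c))

end

section KeyLemmas

variable {T : Type} [CommRing T] (n : ℕ) (u v : T)

lemma keyShift (hv : v ^ n = 1) :
    ∑ k ∈ Finset.range n, v ^ (k + 1) = ∑ k ∈ Finset.range n, v ^ k := by
  have h := Finset.sum_range_succ' (fun k => v ^ k) n
  rw [Finset.sum_range_succ] at h
  simpa [hv] using h.symm

lemma keyRot (hv : v ^ n = 1) :
    v * ∑ k ∈ Finset.range n, v ^ k = ∑ k ∈ Finset.range n, v ^ k := by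
  rw [Finset.mul_sum]
  calc ∑ k ∈ Finset.range n, v * v ^ k = ∑ k ∈ Finset.range n, v ^ (k + 1) := by
        refine Finset.sum_congr rfl fun k _ => ?_; ring
    _ = _ := keyShift n v hv

lemma keyL (S : T) (hS : S = ∑ j ∈ Finset.range n, ∑ i ∈ Finset.range j, u ^ i * v ^ j) :
    (u - 1) * S = ∑ j ∈ Finset.range n, (u ^ j - 1) * v ^ j := by
  rw [hS, Finset.mul_sum]
  refine Finset.sum_congr rfl fun j _ => ?_
  rw [← Finset.sum_mul, ← mul_assoc, mul_geom_sum]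

lemma keyR (hv : v ^ n = 1) (S : T)
    (hS : S = ∑ j ∈ Finset.range n, ∑ i ∈ Finset.range j, u ^ i * v ^ j) :
    (v - 1) * S =
      (∑ i ∈ Finset.range n, u ^ i) - ∑ i ∈ Finset.range n, u ^ i * v ^ (i + 1) := by
  have hswap : S = ∑ i ∈ Finset.range n, ∑ j ∈ Finset.Ico (i + 1) n, u ^ i * v ^ j := by
    rw [hS]
    simp only [Finset.range_eq_Ico]
    rw [Finset.sum_Ico_Ico_comm' 0 n (fun i j => u ^ i * v ^ j)]
  rw [hswap, Finset.mul_sum, ← Finset.sum_sub_distrib]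
  refine Finset.sum_congr rfl fun i hi => ?_
  have hin : i + 1 ≤ n := Finset.mem_range.mp hi
  have hgeo : (v - 1) * ∑ j ∈ Finset.Ico (i + 1) n, v ^ j = v ^ n - v ^ (i + 1) := by
    rw [Finset.sum_Ico_eq_sub _ hin, mul_sub, mul_geom_sum, mul_geom_sum]
    ring
  calc (v - 1) * ∑ j ∈ Finset.Ico (i + 1) n, u ^ i * v ^ j
      = u ^ i * ((v - 1) * ∑ j ∈ Finset.Ico (i + 1) n, v ^ j) := by
        simp only [Finset.mul_sum]
        refine Finset.sum_congr rfl fun j _ => ?_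
        ring
    _ = u ^ i - u ^ i * v ^ (i + 1) := by rw [hgeo, hv]; ring

lemma keyLR (hu : u ^ n = 1) (hv : v ^ n = 1) (S : T)
    (hS : S = ∑ j ∈ Finset.range n, ∑ i ∈ Finset.range j, u ^ i * v ^ j) :
    (u * v - 1) * S = (∑ k ∈ Finset.range n, u ^ k) - ∑ k ∈ Finset.range n, v ^ k := by
  have hdec : u * v - 1 = v * (u - 1) + (v - 1) := by ring
  rw [hdec, add_mul, mul_assoc, keyL n u v S hS, keyR n u v hv S hS]
  rw [Finset.mul_sum]
  have h1 : ∑ j ∈ Finset.range n, v * ((u ^ j - 1) * v ^ j)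
      = (∑ j ∈ Finset.range n, u ^ j * v ^ (j + 1)) - ∑ j ∈ Finset.range n, v ^ (j + 1) := by
    rw [← Finset.sum_sub_distrib]
    refine Finset.sum_congr rfl fun j _ => ?_
    ring
  rw [h1, keyShift n v hv]
  ring

end KeyLemmas

section TensorHelpers

variable (p : ℕ) (G : Type) [CommGroup G]

lemma mapLeft_eq (c : GA p G) (t : GA p G ⊗[ZMod p] GA p G) :
    TensorProduct.map (LinearMap.mulLeft (ZMod p) c) LinearMap.id t
      = (c ⊗ₜ[ZMod p] (1 : GA p G)) * t := by
  induction t using TensorProduct.induction_on with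
  | zero => simp
  | tmul x y =>
      simp [TensorProduct.map_tmul, Algebra.TensorProduct.tmul_mul_tmul,
        LinearMap.mulLeft_apply]
  | add x y hx hy => simp [mul_add, hx, hy]

lemma mapRight_eq (c : GA p G) (t : GA p G ⊗[ZMod p] GA p G) :
    TensorProduct.map LinearMap.id (LinearMap.mulLeft (ZMod p) c) t
      = ((1 : GA p G) ⊗ₜ[ZMod p] c) * t := by
  induction t using TensorProduct.induction_on with
  | zero => simp
  | tmul x y =>
      simp [TensorProduct.map_tmul, Algebra.TensorProduct.tmul_mul_tmul,
        LinearMap.mulLeft_apply]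
  | add x y hx hy => simp [mul_add, hx, hy]

lemma comul2_ofg (g : G) :
    comul2 p G (ofg p G g) = (ofg p G g) ⊗ₜ[ZMod p] (ofg p G g) := by
  rw [comul2, ofg, MonoidAlgebra.lift_of]
  rfl

end TensorHelpers

/-- Let `G` be a cyclic group of order `n` with generator `g`, and
`P_*` the standard periodic resolution with `P_i` free on `e_i`.  The Cartan–Eilenberg
diagonal `Δ : P_* → P_* ⊗ P_*`, whose component into `P_a ⊗ P_b` sends `e_(a+b)` to
`e_a ⊗ e_b` (`a` even), `e_a ⊗ g·e_b` (`a` odd, `b` even), and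
`Σ_{0 ≤ i < j < n} gⁱe_a ⊗ gʲe_b` (`a`, `b` odd), is a chain map of complexes of
`F_p[G]`-modules for the diagonal `G`-action on `P_* ⊗ P_*`.  Identifying `P_i` with
`F_p[G]`, the component of `Δ(e_(a+b))` in `P_a ⊗ P_b` is the element `Δel a b`, the
differentials act by multiplication by `coefD i` (`g - 1` for `i` odd, the norm `N` for
`i` even) on the corresponding factor (with the Koszul sign), and the diagonal action of
the differential's coefficient is multiplication by its image under the comultiplication
`h ↦ h ⊗ h`; commutation of `Δ` with the differentials is then the stated identity,
componentwise at `P_a ⊗ P_b` on `e_(a+b+1)`. -/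
theorem stmt3 (p n : ℕ) (hp : p.Prime) (hn : 0 < n) (G : Type) [CommGroup G] (g : G)
    (hord : orderOf g = n) (hgen : ∀ x : G, x ∈ Subgroup.zpowers g) :
    ∀ a b : ℕ,
      TensorProduct.map (LinearMap.mulLeft (ZMod p) (coefD p n G g (a + 1))) LinearMap.id
          (Δel p n G g (a + 1) b)
        + ((-1 : ZMod p) ^ a) •
            TensorProduct.map LinearMap.id
              (LinearMap.mulLeft (ZMod p) (coefD p n G g (b + 1)))
              (Δel p n G g a (b + 1))
        = comul2 p G (coefD p n G g (a + b + 1)) * Δel p n G g a b := by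
  intro a b
  set X := ofg p G g with hXdef
  set u : GA p G ⊗[ZMod p] GA p G := X ⊗ₜ[ZMod p] (1 : GA p G) with hudef
  set v : GA p G ⊗[ZMod p] GA p G := (1 : GA p G) ⊗ₜ[ZMod p] X with hvdef
  have hgn : g ^ n = 1 := by rw [← hord]; exact pow_orderOf_eq_one g
  have hX : X ^ n = 1 := by
    rw [hXdef, ofg, ← map_pow, hgn, map_one]
  have hu : u ^ n = 1 := by
    rw [hudef, Algebra.TensorProduct.tmul_pow, hX, one_pow, Algebra.TensorProduct.one_def]
  have hv : v ^ n = 1 := by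
    rw [hvdef, Algebra.TensorProduct.tmul_pow, hX, one_pow, Algebra.TensorProduct.one_def]
  have htm : ∀ i j : ℕ, (X ^ i) ⊗ₜ[ZMod p] (X ^ j) = u ^ i * v ^ j := by
    intro i j
    rw [hudef, hvdef, Algebra.TensorProduct.tmul_pow, Algebra.TensorProduct.tmul_pow,
      Algebra.TensorProduct.tmul_mul_tmul, one_pow, one_pow, mul_one, one_mul]
  have h11 : (1 : GA p G) ⊗ₜ[ZMod p] (1 : GA p G) = 1 := (Algebra.TensorProduct.one_def).symm
  have h1X : (1 : GA p G) ⊗ₜ[ZMod p] X = v := rfl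
  have hcX : comul2 p G X = u * v := by
    rw [comul2_ofg]
    have := htm 1 1
    simpa using this
  have hcsub : comul2 p G (X - 1) = u * v - 1 := by
    rw [map_sub, map_one, hcX]
  have hcN : comul2 p G (normElt p n G g) = ∑ k ∈ Finset.range n, (u * v) ^ k := by
    rw [normElt, map_sum]
    exact Finset.sum_congr rfl fun k _ => by rw [map_pow, hcX]
  have hNl : (normElt p n G g) ⊗ₜ[ZMod p] (1 : GA p G) = ∑ k ∈ Finset.range n, u ^ k := by
    rw [normElt, TensorProduct.sum_tmul]
    refine Finset.sum_congr rfl fun k _ => ?_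
    rw [hudef, Algebra.TensorProduct.tmul_pow, one_pow]
  have hNr : (1 : GA p G) ⊗ₜ[ZMod p] (normElt p n G g) = ∑ k ∈ Finset.range n, v ^ k := by
    rw [normElt, TensorProduct.tmul_sum]
    refine Finset.sum_congr rfl fun k _ => ?_
    rw [hvdef, Algebra.TensorProduct.tmul_pow, one_pow]
  have hSdef : (∑ j ∈ Finset.range n, ∑ i ∈ Finset.range j, (X ^ i) ⊗ₜ[ZMod p] (X ^ j))
      = ∑ j ∈ Finset.range n, ∑ i ∈ Finset.range j, u ^ i * v ^ j := by
    refine Finset.sum_congr rfl fun j _ => Finset.sum_congr rfl fun i _ => htm i j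
  rw [mapLeft_eq, mapRight_eq]
  rcases Nat.even_or_odd a with ha | ha <;> rcases Nat.even_or_odd b with hb | hb
  · -- a even, b even
    have hoa1 : Odd (a + 1) := ha.add_one
    have hob1 : Odd (b + 1) := hb.add_one
    have hoab : Odd (a + b + 1) := by
      rw [Nat.odd_iff]; rw [Nat.even_iff] at ha hb; omega
    have hna1 : ¬ Even (a + 1) := (Nat.not_even_iff_odd).mpr hoa1
    rw [coefD, if_pos hoa1, coefD, if_pos hob1, coefD, if_pos hoab,
      Δel, if_neg hna1, if_pos hb, Δel, if_pos ha, Δel, if_pos ha,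
      hcsub, h11, h1X, ha.neg_one_pow, one_smul]
    have hsub1 : (X - 1) ⊗ₜ[ZMod p] (1 : GA p G) = u - 1 := by
      rw [TensorProduct.sub_tmul, h11]
    have hsub2 : (1 : GA p G) ⊗ₜ[ZMod p] (X - 1) = v - 1 := by
      rw [TensorProduct.tmul_sub, h11]
    rw [hsub1, hsub2]
    ring
  · -- a even, b odd
    have hoa1 : Odd (a + 1) := ha.add_one
    have hnb1 : ¬ Odd (b + 1) := by
      rw [Nat.odd_iff]; rw [Nat.odd_iff] at hb; omega
    have hneab : ¬ Odd (a + b + 1) := by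
      rw [Nat.odd_iff]; rw [Nat.even_iff] at ha; rw [Nat.odd_iff] at hb; omega
    have hna1 : ¬ Even (a + 1) := (Nat.not_even_iff_odd).mpr hoa1
    have hnb : ¬ Even b := (Nat.not_even_iff_odd).mpr hb
    rw [coefD, if_pos hoa1, coefD, if_neg hnb1, coefD, if_neg hneab,
      Δel, if_neg hna1, if_neg hnb, Δel, if_pos ha, Δel, if_pos ha,
      hcN, h11, ha.neg_one_pow, one_smul, hNr, hSdef]
    have hsub1 : (X - 1) ⊗ₜ[ZMod p] (1 : GA p G) = u - 1 := by
      rw [TensorProduct.sub_tmul, h11]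
    rw [hsub1, mul_one, mul_one,
      keyL n u v _ rfl, ← Finset.sum_add_distrib]
    refine Finset.sum_congr rfl fun j _ => ?_
    rw [mul_pow]; ring
  · -- a odd, b even
    have hnoa1 : ¬ Odd (a + 1) := by
      rw [Nat.odd_iff]; rw [Nat.odd_iff] at ha; omega
    have hob1 : Odd (b + 1) := hb.add_one
    have hneab : ¬ Odd (a + b + 1) := by
      rw [Nat.odd_iff]; rw [Nat.odd_iff] at ha; rw [Nat.even_iff] at hb; omega
    have hea1 : Even (a + 1) := ha.add_one
    have hna : ¬ Even a := (Nat.not_even_iff_odd).mpr ha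
    have hnb1 : ¬ Even (b + 1) := by
      rw [Nat.even_iff]; rw [Nat.even_iff] at hb; omega
    rw [coefD, if_neg hnoa1, coefD, if_pos hob1, coefD, if_neg hneab,
      Δel, if_pos hea1, Δel, if_neg hna, if_neg hnb1, Δel, if_neg hna, if_pos hb,
      hcN, h11, hNl, hSdef, h1X]
    have hneg : ∀ t : GA p G ⊗[ZMod p] GA p G, ((-1 : ZMod p) ^ a) • t = -t := by
      intro t; rw [ha.neg_one_pow]; exact neg_one_smul (ZMod p) t
    rw [hneg]
    have hsub2 : (1 : GA p G) ⊗ₜ[ZMod p] (X - 1) = v - 1 := by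
      rw [TensorProduct.tmul_sub, h11]
    rw [hsub2, mul_one, keyR n u v hv _ rfl, Finset.sum_mul]
    have : ∑ k ∈ Finset.range n, (u * v) ^ k * v
        = ∑ k ∈ Finset.range n, u ^ k * v ^ (k + 1) := by
      refine Finset.sum_congr rfl fun k _ => ?_
      rw [mul_pow]; ring
    rw [this]
    ring
  · -- a odd, b odd
    have hnoa1 : ¬ Odd (a + 1) := by
      rw [Nat.odd_iff]; rw [Nat.odd_iff] at ha; omega
    have hnob1 : ¬ Odd (b + 1) := by
      rw [Nat.odd_iff]; rw [Nat.odd_iff] at hb; omega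
    have hoab : Odd (a + b + 1) := by
      rw [Nat.odd_iff]; rw [Nat.odd_iff] at ha hb; omega
    have hea1 : Even (a + 1) := ha.add_one
    have heb1 : Even (b + 1) := hb.add_one
    have hna : ¬ Even a := (Nat.not_even_iff_odd).mpr ha
    have hnb : ¬ Even b := (Nat.not_even_iff_odd).mpr hb
    rw [coefD, if_neg hnoa1, coefD, if_neg hnob1, coefD, if_pos hoab,
      Δel, if_pos hea1, Δel, if_neg hna, if_pos heb1, Δel, if_neg hna, if_neg hnb,
      hcsub, h11, hNl, hNr, hSdef, h1X]
    have hneg : ∀ t : GA p G ⊗[ZMod p] GA p G, ((-1 : ZMod p) ^ a) • t = -t := by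
      intro t; rw [ha.neg_one_pow]; exact neg_one_smul (ZMod p) t
    rw [hneg]
    rw [mul_one, keyLR n u v hu hv _ rfl]
    have : (∑ k ∈ Finset.range n, v ^ k) * v = ∑ k ∈ Finset.range n, v ^ k := by
      rw [mul_comm]; exact keyRot n v hv
    rw [this]
    ring
end

section
/- Let G be cyclic of order n with generator g, P_* the standard periodic resolution, and Δ the Cartan–Eilenberg diagonal approximation. Define H: P_* → (P_* ⊗ P_* ⊗ P_*)_* of degree +1 with component into P_a ⊗ P_b ⊗ P_c given on e_{a+b+c-1} by Σ_{0 ≤ i < j < k < n} g^i e_a ⊗ g^j e_b ⊗ g^k e_c when a, b, c are all odd, and 0 otherwise. Then dH + Hd = (Δ ⊗ 1)Δ − (1 ⊗ Δ)Δ, i.e. H is a chain homotopy witnessing the coassociativity of Δ up to homotopy. -/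
open Finset TensorProduct

set_option maxRecDepth 8000
set_option synthInstance.maxHeartbeats 1000000
set_option maxHeartbeats 3200000

-- ===== auxiliary lemmas =====
section aux
open Finset

lemma tele_Ico' {R : Type*} [AddCommGroup R] (f : ℕ → R) {a b : ℕ} (h : a ≤ b) :
    ∑ k ∈ Finset.Ico a b, (f (k + 1) - f k) = f b - f a := by
  rw [Finset.sum_Ico_eq_sub _ h, Finset.sum_range_sub, Finset.sum_range_sub]
  abel

lemma swap_tri' {M : Type*} [AddCommMonoid M] (n : ℕ) (f : ℕ → ℕ → M) :
    ∑ k ∈ range n, ∑ j ∈ range k, f j k = ∑ j ∈ range n, ∑ k ∈ Finset.Ico (j + 1) n, f j k := by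
  simp only [Finset.range_eq_Ico]; rw [← Finset.sum_Ico_Ico_comm']

section ringlems
variable {R : Type*} [CommRing R] (n : ℕ) (x y z : R)

lemma L_eoo :
    ∑ k ∈ range n, ∑ j ∈ range k, ∑ i ∈ range j, (x ^ (i+1) * y ^ j * z ^ k - x ^ i * y ^ j * z ^ k)
      = ∑ k ∈ range n, ∑ j ∈ range k, (x ^ j * y ^ j * z ^ k - y ^ j * z ^ k) := by
  refine Finset.sum_congr rfl fun k _ => Finset.sum_congr rfl fun j _ => ?_
  rw [Finset.sum_range_sub (fun i => x ^ i * y ^ j * z ^ k)]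
  ring

lemma L_oeo :
    ∑ k ∈ range n, ∑ j ∈ range k, ∑ i ∈ range j, (x ^ i * y ^ j * z ^ k - x ^ i * y ^ (j+1) * z ^ k)
      = ∑ j ∈ range n, ∑ i ∈ range j, (x ^ i * y ^ (i+1) * z ^ j - x ^ i * y ^ j * z ^ j) := by
  refine Finset.sum_congr rfl fun k hk => ?_
  simp only [Finset.range_eq_Ico]; rw [← Finset.sum_Ico_Ico_comm'
    (f := fun i j => x ^ i * y ^ j * z ^ k - x ^ i * y ^ (j+1) * z ^ k)]
  refine Finset.sum_congr rfl fun i hi => ?_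
  rw [Finset.mem_Ico] at hi
  have : ∑ j ∈ Finset.Ico (i+1) k, (x ^ i * y ^ j * z ^ k - x ^ i * y ^ (j+1) * z ^ k)
      = -∑ j ∈ Finset.Ico (i+1) k, ((fun j => x ^ i * y ^ j * z ^ k) (j+1) - (fun j => x ^ i * y ^ j * z ^ k) j) := by
    rw [← Finset.sum_neg_distrib]; exact Finset.sum_congr rfl fun j _ => by ring
  rw [this, tele_Ico' (fun j => x ^ i * y ^ j * z ^ k) (show i + 1 ≤ k by omega)]
  ring

lemma L_oeo2 :
    ∑ k ∈ range n, ∑ j ∈ range k, ∑ i ∈ range j, (x ^ i * y ^ (j+1) * z ^ k - x ^ i * y ^ j * z ^ k)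
      = ∑ j ∈ range n, ∑ i ∈ range j, (x ^ i * y ^ j * z ^ j - x ^ i * y ^ (i+1) * z ^ j) := by
  refine Finset.sum_congr rfl fun k hk => ?_
  simp only [Finset.range_eq_Ico]; rw [← Finset.sum_Ico_Ico_comm'
    (f := fun i j => x ^ i * y ^ (j+1) * z ^ k - x ^ i * y ^ j * z ^ k)]
  refine Finset.sum_congr rfl fun i hi => ?_
  rw [Finset.mem_Ico] at hi
  rw [tele_Ico' (fun j => x ^ i * y ^ j * z ^ k) (show i + 1 ≤ k by omega)]

lemma L_ooe (hz : z ^ n = 1) :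
    ∑ k ∈ range n, ∑ j ∈ range k, ∑ i ∈ range j, (x ^ i * y ^ j * z ^ (k+1) - x ^ i * y ^ j * z ^ k)
      = ∑ j ∈ range n, ∑ i ∈ range j, (x ^ i * y ^ j - x ^ i * y ^ j * z ^ (j+1)) := by
  rw [swap_tri']
  refine Finset.sum_congr rfl fun j hj => ?_
  rw [Finset.mem_range] at hj
  rw [Finset.sum_comm]
  refine Finset.sum_congr rfl fun i _ => ?_
  rw [tele_Ico' (fun k => x ^ i * y ^ j * z ^ k) hj, hz, pow_succ]
  ring

lemma L_ooo (hz : z ^ n = 1) :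
    ∑ k ∈ range n, ∑ j ∈ range k, ∑ i ∈ range j,
        (x ^ (i+1) * y ^ (j+1) * z ^ (k+1) - x ^ i * y ^ j * z ^ k)
      = ∑ j ∈ range n, ∑ i ∈ range j, x ^ i * y ^ j
        - ∑ j ∈ range n, ∑ i ∈ range j, y ^ (i+1) * z ^ (j+1) := by
  have split : ∀ i j k : ℕ, x ^ (i+1) * y ^ (j+1) * z ^ (k+1) - x ^ i * y ^ j * z ^ k
      = (x ^ (i+1) * y ^ (j+1) * z ^ (k+1) - x ^ i * y ^ (j+1) * z ^ (k+1))
        + (x ^ i * y ^ (j+1) * z ^ (k+1) - x ^ i * y ^ j * z ^ (k+1))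
        + (x ^ i * y ^ j * z ^ (k+1) - x ^ i * y ^ j * z ^ k) := fun i j k => by ring
  simp only [split, Finset.sum_add_distrib]
  have hA : ∑ k ∈ range n, ∑ j ∈ range k, ∑ i ∈ range j,
      (x ^ (i+1) * y ^ (j+1) * z ^ (k+1) - x ^ i * y ^ (j+1) * z ^ (k+1))
      = ∑ k ∈ range n, ∑ j ∈ range k, (x ^ j * y ^ (j+1) * z ^ (k+1) - y ^ (j+1) * z ^ (k+1)) := by
    refine Finset.sum_congr rfl fun k _ => Finset.sum_congr rfl fun j _ => ?_
    rw [Finset.sum_range_sub (fun i => x ^ i * y ^ (j+1) * z ^ (k+1))]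
    ring
  have hB : ∑ k ∈ range n, ∑ j ∈ range k, ∑ i ∈ range j,
      (x ^ i * y ^ (j+1) * z ^ (k+1) - x ^ i * y ^ j * z ^ (k+1))
      = ∑ k ∈ range n, ∑ i ∈ range k, (x ^ i * y ^ k * z ^ (k+1) - x ^ i * y ^ (i+1) * z ^ (k+1)) := by
    refine Finset.sum_congr rfl fun k _ => ?_
    simp only [Finset.range_eq_Ico]; rw [← Finset.sum_Ico_Ico_comm'
      (f := fun i j => x ^ i * y ^ (j+1) * z ^ (k+1) - x ^ i * y ^ j * z ^ (k+1))]
    refine Finset.sum_congr rfl fun i hi => ?_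
    rw [Finset.mem_Ico] at hi
    exact tele_Ico' (fun j => x ^ i * y ^ j * z ^ (k+1)) (show i + 1 ≤ k by omega)
  rw [hA, hB, L_ooe n x y z hz]
  simp only [Finset.sum_sub_distrib]
  abel

end ringlems
end aux


section aux2
variable (p n : ℕ) (G : Type) [CommGroup G] (g : G)

lemma Hel_zero {a b c : ℕ} (h : ¬(Odd a ∧ Odd b ∧ Odd c)) : Hel p n G g a b c = 0 := by
  rw [Hel, if_neg h]

lemma Hel_odd {a b c : ℕ} (ha : Odd a) (hb : Odd b) (hc : Odd c) :
    Hel p n G g a b c = ∑ k ∈ Finset.range n, ∑ j ∈ Finset.range k, ∑ i ∈ Finset.range j,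
      ((ofg p G g) ^ i) ⊗ₜ (((ofg p G g) ^ j) ⊗ₜ ((ofg p G g) ^ k)) := by
  rw [Hel, if_pos ⟨ha, hb, hc⟩]

lemma Δel_e {a : ℕ} (b : ℕ) (ha : Even a) : Δel p n G g a b = 1 ⊗ₜ 1 := by
  rw [Δel, if_pos ha]

lemma Δel_oe {a b : ℕ} (ha : Odd a) (hb : Even b) : Δel p n G g a b = 1 ⊗ₜ (ofg p G g) := by
  rw [Δel, if_neg (Nat.not_even_iff_odd.mpr ha), if_pos hb]

lemma Δel_oo {a b : ℕ} (ha : Odd a) (hb : Odd b) :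
    Δel p n G g a b = ∑ j ∈ Finset.range n, ∑ i ∈ Finset.range j,
      ((ofg p G g) ^ i) ⊗ₜ ((ofg p G g) ^ j) := by
  rw [Δel, if_neg (Nat.not_even_iff_odd.mpr ha), if_neg (Nat.not_even_iff_odd.mpr hb)]

lemma neg_sum3 {R : Type*} [CommRing R] (n : ℕ) (F : ℕ → ℕ → ℕ → R) :
    (-∑ k ∈ Finset.range n, ∑ j ∈ Finset.range k, ∑ i ∈ Finset.range j, F i j k)
      = ∑ k ∈ Finset.range n, ∑ j ∈ Finset.range k, ∑ i ∈ Finset.range j, (-F i j k) := by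
  simp only [Finset.sum_neg_distrib]

lemma neg_one_smul_GA3 (x : GA3 p G) : (-1 : ZMod p) • x = -x := by module

lemma GA3_sub_mul (A B C : GA3 p G) : (A - B) * C = A * C - B * C := by ring

lemma GA3_mul_sum (A : GA3 p G) (s : Finset ℕ) (f : ℕ → GA3 p G) :
    A * ∑ x ∈ s, f x = ∑ x ∈ s, A * f x := by exact Finset.mul_sum s f A

lemma GA2_mul_sum (A : GA p G ⊗[ZMod p] GA p G) (s : Finset ℕ)
    (f : ℕ → GA p G ⊗[ZMod p] GA p G) :
    A * ∑ x ∈ s, f x = ∑ x ∈ s, A * f x := by exact Finset.mul_sum s f A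

lemma sum_sub_GA3 {R : Type*} [CommRing R] (s : Finset ℕ) (f h : ℕ → R) :
    (∑ x ∈ s, (f x - h x)) = ∑ x ∈ s, f x - ∑ x ∈ s, h x := by
  simp only [sub_eq_add_neg, Finset.sum_add_distrib, Finset.sum_neg_distrib]

end aux2

/-- Let `G` be cyclic of order `n` with generator `g`, `P_*` the
standard periodic resolution, and `Δ` the Cartan–Eilenberg diagonal approximation.
Define `H : P_* → (P_* ⊗ P_* ⊗ P_*)_*` of degree `+1`, whose component into
`P_a ⊗ P_b ⊗ P_c` on `e_(a+b+c-1)` is `Σ_{0 ≤ i < j < k < n} gⁱe_a ⊗ gʲe_b ⊗ gᵏe_c`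
when `a, b, c` are all odd, and `0` otherwise.  Then `dH + Hd = (Δ⊗1)Δ − (1⊗Δ)Δ`.
Identifying `P_i` with `F_p[G]`, this is the following componentwise identity at
`P_a ⊗ P_b ⊗ P_c`, evaluated on `e_(a+b+c)`, with the usual Koszul signs on the
differential of the triple tensor product and with `Hel a b c` the coefficient of the
component of `H(e_(a+b+c-1))` in `P_a ⊗ P_b ⊗ P_c`. -/
theorem stmt4 (p n : ℕ) (hp : p.Prime) (hn : 0 < n) (G : Type) [CommGroup G] (g : G)
    (hord : orderOf g = n) (hgen : ∀ x : G, x ∈ Subgroup.zpowers g) :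
    ∀ a b c : ℕ,
      -- dH
      TensorProduct.map (LinearMap.mulLeft (ZMod p) (coefD p n G g (a + 1))) LinearMap.id
          (Hel p n G g (a + 1) b c)
        + ((-1 : ZMod p) ^ a) •
            TensorProduct.map LinearMap.id
              (TensorProduct.map (LinearMap.mulLeft (ZMod p) (coefD p n G g (b + 1)))
                LinearMap.id)
              (Hel p n G g a (b + 1) c)
        + ((-1 : ZMod p) ^ (a + b)) •
            TensorProduct.map LinearMap.id
              (TensorProduct.map LinearMap.id
                (LinearMap.mulLeft (ZMod p) (coefD p n G g (c + 1))))
              (Hel p n G g a b (c + 1))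
        -- + Hd
        + comul3 p G (coefD p n G g (a + b + c)) * Hel p n G g a b c
      -- = (Δ⊗1)Δ − (1⊗Δ)Δ
      = coassocDefect p n G g a b c := by
  intro a b c
  have hg : g ^ n = 1 := hord ▸ pow_orderOf_eq_one g
  set t : GA p G := ofg p G g with ht
  have htn : t ^ n = 1 := by
    rw [ht, ofg, ← map_pow, hg, map_one]
  have hc2 : ∀ k : ℕ, comul2 p G (t ^ k) = (t ^ k) ⊗ₜ[ZMod p] (t ^ k) := by
    intro k
    rw [map_pow, ht, ofg, comul2, MonoidAlgebra.lift_of, ← Algebra.TensorProduct.tmul_pow]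
    rfl
  have hc3 : ∀ k : ℕ, comul3 p G (t ^ k)
      = (t ^ k) ⊗ₜ[ZMod p] ((t ^ k) ⊗ₜ[ZMod p] (t ^ k)) := by
    intro k
    rw [← AlgHom.coe_toRingHom, map_pow, AlgHom.coe_toRingHom, ht, ofg, comul3, MonoidAlgebra.lift_of]
    show ((MonoidAlgebra.of (ZMod p) G g) ⊗ₜ[ZMod p] ((MonoidAlgebra.of (ZMod p) G g) ⊗ₜ[ZMod p] (MonoidAlgebra.of (ZMod p) G g))) ^ k = _
    rw [Algebra.TensorProduct.tmul_pow, Algebra.TensorProduct.tmul_pow]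
  have hc21 : comul2 p G t = t ⊗ₜ[ZMod p] t := by simpa using hc2 1
  rcases Nat.even_or_odd a with ha | ha <;> rcases Nat.even_or_odd b with hb | hb <;>
    rcases Nat.even_or_odd c with hc | hc
  · -- eee
    rw [Hel_zero p n G g (fun h => (Nat.not_odd_iff_even.mpr hb) h.2.1),
        Hel_zero p n G g (fun h => (Nat.not_odd_iff_even.mpr ha) h.1),
        Hel_zero p n G g (fun h => (Nat.not_odd_iff_even.mpr ha) h.1),
        Hel_zero p n G g (fun h => (Nat.not_odd_iff_even.mpr ha) h.1)]
    simp only [map_zero, smul_zero, mul_zero, add_zero, zero_add]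
    rw [coassocDefect, Δel_e p n G g _ ha, Δel_e p n G g _ (ha.add hb)]
    simp [Δmap, Δel_e p n G g _ ha, Δel_e p n G g _ hb, Algebra.TensorProduct.one_def,
      TensorProduct.assoc_tmul]
    exact mul_zero (M₀ := GA3 p G) _
  · -- eeo
    rw [Hel_zero p n G g (fun h => (Nat.not_odd_iff_even.mpr hb) h.2.1),
        Hel_zero p n G g (fun h => (Nat.not_odd_iff_even.mpr ha) h.1),
        Hel_zero p n G g (fun h => (Nat.not_odd_iff_even.mpr ha) h.1),
        Hel_zero p n G g (fun h => (Nat.not_odd_iff_even.mpr ha) h.1)]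
    simp only [map_zero, smul_zero, add_zero, zero_add]
    rw [coassocDefect, Δel_e p n G g _ ha, Δel_e p n G g _ (ha.add hb)]
    simp [Δmap, Δel_e p n G g _ ha, Δel_e p n G g _ hb, Algebra.TensorProduct.one_def,
      TensorProduct.assoc_tmul]
    exact mul_zero (M₀ := GA3 p G) _
  · -- eoe
    rw [Hel_zero p n G g (fun h => (Nat.not_odd_iff_even.mpr hc) h.2.2),
        Hel_zero p n G g (fun h => (Nat.not_odd_iff_even.mpr ha) h.1),
        Hel_zero p n G g (fun h => (Nat.not_odd_iff_even.mpr ha) h.1),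
        Hel_zero p n G g (fun h => (Nat.not_odd_iff_even.mpr ha) h.1)]
    simp only [map_zero, smul_zero, add_zero, zero_add]
    rw [coassocDefect, Δel_e p n G g _ ha, Δel_oe p n G g (ha.add_odd hb) hc]
    simp [Δmap, Δel_e p n G g _ ha, Δel_oe p n G g hb hc, Algebra.TensorProduct.one_def,
      TensorProduct.assoc_tmul, ← ht]
    exact mul_zero (M₀ := GA3 p G) _
  · -- eoo
    rw [Hel_odd p n G g (Even.add_one ha) hb hc,
        Hel_zero p n G g (fun h => (Nat.not_odd_iff_even.mpr ha) h.1),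
        Hel_zero p n G g (fun h => (Nat.not_odd_iff_even.mpr ha) h.1),
        Hel_zero p n G g (fun h => (Nat.not_odd_iff_even.mpr ha) h.1)]
    rw [show comul3 p G (coefD p n G g (a+b+c)) * (0 : GA3 p G) = 0 from mul_zero (M₀ := GA3 p G) _]
    simp only [map_zero, smul_zero, add_zero, zero_add]
    rw [coassocDefect, Δel_e p n G g _ ha, Δel_oo p n G g (ha.add_odd hb) hc]
    rw [coefD, if_pos (Even.add_one ha)]
    simp only [Δmap, Δel_e p n G g _ ha, Δel_oo p n G g hb hc, map_sum,
      TensorProduct.map_tmul, TensorProduct.sum_tmul, TensorProduct.tmul_sum,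
      LinearMap.mulLeft_apply, LinearMap.id_coe, id_eq, LinearMap.coe_comp,
      Function.comp_apply, LinearMap.mulRight_apply, AlgHom.toLinearMap_apply, hc2, map_one,
      Algebra.TensorProduct.tmul_mul_tmul, Algebra.TensorProduct.one_def,
      TensorProduct.assoc_tmul, mul_one, one_mul, ← ht]
    simp only [← Algebra.TensorProduct.one_def, one_mul, TensorProduct.tmul_sum]
    have key := L_eoo (R := GA3 p G) n (t ⊗ₜ[ZMod p] ((1:GA p G) ⊗ₜ[ZMod p] (1:GA p G)))
      ((1:GA p G) ⊗ₜ[ZMod p] (t ⊗ₜ[ZMod p] (1:GA p G)))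
      ((1:GA p G) ⊗ₜ[ZMod p] ((1:GA p G) ⊗ₜ[ZMod p] t))
    simp only [Algebra.TensorProduct.tmul_pow, one_pow,
      Algebra.TensorProduct.tmul_mul_tmul, mul_one, one_mul] at key
    calc ∑ x ∈ Finset.range n, ∑ x_1 ∈ Finset.range x, ∑ x_2 ∈ Finset.range x_1,
            ((t - 1) * t ^ x_2) ⊗ₜ[ZMod p] ((t ^ x_1) ⊗ₜ[ZMod p] (t ^ x))
        = ∑ x ∈ Finset.range n, ∑ x_1 ∈ Finset.range x, ∑ x_2 ∈ Finset.range x_1,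
            ((t ^ (x_2+1)) ⊗ₜ[ZMod p] ((t ^ x_1) ⊗ₜ[ZMod p] (t ^ x))
              - (t ^ x_2) ⊗ₜ[ZMod p] ((t ^ x_1) ⊗ₜ[ZMod p] (t ^ x))) := by
          refine Finset.sum_congr rfl fun k _ => Finset.sum_congr rfl fun j _ =>
            Finset.sum_congr rfl fun i _ => ?_
          rw [sub_mul, one_mul, ← pow_succ', TensorProduct.sub_tmul]
      _ = ∑ x ∈ Finset.range n, ∑ x_1 ∈ Finset.range x,
            ((t ^ x_1) ⊗ₜ[ZMod p] ((t ^ x_1) ⊗ₜ[ZMod p] (t ^ x))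
              - (1:GA p G) ⊗ₜ[ZMod p] ((t ^ x_1) ⊗ₜ[ZMod p] (t ^ x))) := key
      _ = _ := by simp only [sum_sub_GA3 (R := GA3 p G)]
  · -- oee
    rw [Hel_zero p n G g (fun h => (Nat.not_odd_iff_even.mpr hb) h.2.1),
        Hel_zero p n G g (fun h => (Nat.not_odd_iff_even.mpr hc) h.2.2),
        Hel_zero p n G g (fun h => (Nat.not_odd_iff_even.mpr hb) h.2.1),
        Hel_zero p n G g (fun h => (Nat.not_odd_iff_even.mpr hb) h.2.1)]
    simp only [map_zero, smul_zero, add_zero, zero_add]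
    rw [coassocDefect, Δel_oe p n G g ha (hb.add hc), Δel_oe p n G g (ha.add_even hb) hc]
    simp [Δmap, Δel_oe p n G g ha hb, Δel_e p n G g _ hb, hc21, Algebra.TensorProduct.one_def,
      TensorProduct.assoc_tmul, ← ht]
    exact mul_zero (M₀ := GA3 p G) _
  · -- oeo
    rw [Hel_zero p n G g (fun h => (Nat.not_odd_iff_even.mpr (Odd.add_one ha)) h.1),
        Hel_odd p n G g ha (Even.add_one hb) hc,
        Hel_zero p n G g (fun h => (Nat.not_odd_iff_even.mpr hb) h.2.1),
        Hel_zero p n G g (fun h => (Nat.not_odd_iff_even.mpr hb) h.2.1)]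
    rw [show comul3 p G (coefD p n G g (a+b+c)) * (0 : GA3 p G) = 0
        from mul_zero (M₀ := GA3 p G) _]
    rw [Odd.neg_one_pow ha]
    simp only [map_zero, smul_zero, add_zero, zero_add, neg_smul, one_smul]
    rw [neg_one_smul_GA3]
    rw [coassocDefect, Δel_oo p n G g ha (hb.add_odd hc), Δel_oo p n G g (ha.add_even hb) hc]
    rw [coefD, if_pos (Even.add_one hb)]
    simp only [Δmap, Δel_oe p n G g ha hb, Δel_e p n G g _ hb, map_sum,
      TensorProduct.map_tmul, TensorProduct.sum_tmul, TensorProduct.tmul_sum,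
      LinearMap.mulLeft_apply, LinearMap.id_coe, id_eq, LinearMap.coe_comp,
      Function.comp_apply, LinearMap.mulRight_apply, AlgHom.toLinearMap_apply, hc2, map_one,
      Algebra.TensorProduct.tmul_mul_tmul, Algebra.TensorProduct.one_def,
      TensorProduct.assoc_tmul, mul_one, one_mul, ← ht]
    simp only [TensorProduct.sum_tmul, map_sum, TensorProduct.assoc_tmul, ← pow_succ]
    have key := L_oeo2 (R := GA3 p G) n (t ⊗ₜ[ZMod p] ((1:GA p G) ⊗ₜ[ZMod p] (1:GA p G)))
      ((1:GA p G) ⊗ₜ[ZMod p] (t ⊗ₜ[ZMod p] (1:GA p G)))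
      ((1:GA p G) ⊗ₜ[ZMod p] ((1:GA p G) ⊗ₜ[ZMod p] t))
    simp only [Algebra.TensorProduct.tmul_pow, one_pow,
      Algebra.TensorProduct.tmul_mul_tmul, mul_one, one_mul] at key
    have hS : ∑ x ∈ Finset.range n, ∑ x_1 ∈ Finset.range x, ∑ x_2 ∈ Finset.range x_1,
            (t ^ x_2) ⊗ₜ[ZMod p] (((t - 1) * t ^ x_1) ⊗ₜ[ZMod p] (t ^ x))
        = ∑ x ∈ Finset.range n, ∑ x_1 ∈ Finset.range x, (t ^ x_1) ⊗ₜ[ZMod p] ((t ^ x) ⊗ₜ[ZMod p] (t ^ x))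
          - ∑ x ∈ Finset.range n, ∑ x_1 ∈ Finset.range x,
              (t ^ x_1) ⊗ₜ[ZMod p] ((t ^ (x_1+1)) ⊗ₜ[ZMod p] (t ^ x)) := by
      calc ∑ x ∈ Finset.range n, ∑ x_1 ∈ Finset.range x, ∑ x_2 ∈ Finset.range x_1,
            (t ^ x_2) ⊗ₜ[ZMod p] (((t - 1) * t ^ x_1) ⊗ₜ[ZMod p] (t ^ x))
          = ∑ x ∈ Finset.range n, ∑ x_1 ∈ Finset.range x, ∑ x_2 ∈ Finset.range x_1,
              ((t ^ x_2) ⊗ₜ[ZMod p] ((t ^ (x_1+1)) ⊗ₜ[ZMod p] (t ^ x))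
                - (t ^ x_2) ⊗ₜ[ZMod p] ((t ^ x_1) ⊗ₜ[ZMod p] (t ^ x))) := by
            refine Finset.sum_congr rfl fun k _ => Finset.sum_congr rfl fun j _ =>
              Finset.sum_congr rfl fun i _ => ?_
            rw [sub_mul, one_mul, ← pow_succ', TensorProduct.sub_tmul, TensorProduct.tmul_sub]
        _ = ∑ x ∈ Finset.range n, ∑ x_1 ∈ Finset.range x,
              ((t ^ x_1) ⊗ₜ[ZMod p] ((t ^ x) ⊗ₜ[ZMod p] (t ^ x))
                - (t ^ x_1) ⊗ₜ[ZMod p] ((t ^ (x_1+1)) ⊗ₜ[ZMod p] (t ^ x))) := key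
        _ = _ := by simp only [sum_sub_GA3 (R := GA3 p G)]
    rw [hS]
    exact neg_sub (α := GA3 p G) _ _
  · -- ooe
    rw [Hel_zero p n G g (fun h => (Nat.not_odd_iff_even.mpr (Odd.add_one ha)) h.1),
        Hel_zero p n G g (fun h => (Nat.not_odd_iff_even.mpr (Odd.add_one hb)) h.2.1),
        Hel_odd p n G g ha hb (Even.add_one hc),
        Hel_zero p n G g (fun h => (Nat.not_odd_iff_even.mpr hc) h.2.2)]
    rw [show comul3 p G (coefD p n G g (a+b+c)) * (0 : GA3 p G) = 0
        from mul_zero (M₀ := GA3 p G) _]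
    rw [Even.neg_one_pow (Odd.add_odd ha hb)]
    simp only [map_zero, smul_zero, add_zero, zero_add, one_smul]
    rw [coassocDefect, Δel_oo p n G g ha (hb.add_even hc), Δel_e p n G g _ (Odd.add_odd ha hb)]
    rw [coefD, if_pos (Even.add_one hc)]
    simp only [Δmap, Δel_oo p n G g ha hb, Δel_oe p n G g hb hc, map_sum,
      TensorProduct.map_tmul, TensorProduct.sum_tmul, TensorProduct.tmul_sum,
      LinearMap.mulLeft_apply, LinearMap.id_coe, id_eq, LinearMap.coe_comp,
      Function.comp_apply, LinearMap.mulRight_apply, AlgHom.toLinearMap_apply, hc2, map_one,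
      Algebra.TensorProduct.tmul_mul_tmul, Algebra.TensorProduct.one_def,
      TensorProduct.assoc_tmul, mul_one, one_mul, ← ht]
    simp only [← Algebra.TensorProduct.one_def, one_mul, TensorProduct.tmul_sum]
    simp only [TensorProduct.sum_tmul, map_sum, TensorProduct.assoc_tmul, ← pow_succ]
    have hZ : ((1:GA p G) ⊗ₜ[ZMod p] ((1:GA p G) ⊗ₜ[ZMod p] t)) ^ n = (1 : GA3 p G) := by
      simp only [Algebra.TensorProduct.tmul_pow, one_pow, htn, ← Algebra.TensorProduct.one_def]
    have key := L_ooe (R := GA3 p G) n (t ⊗ₜ[ZMod p] ((1:GA p G) ⊗ₜ[ZMod p] (1:GA p G)))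
      ((1:GA p G) ⊗ₜ[ZMod p] (t ⊗ₜ[ZMod p] (1:GA p G)))
      ((1:GA p G) ⊗ₜ[ZMod p] ((1:GA p G) ⊗ₜ[ZMod p] t)) hZ
    simp only [Algebra.TensorProduct.tmul_pow, one_pow,
      Algebra.TensorProduct.tmul_mul_tmul, mul_one, one_mul] at key
    calc ∑ x ∈ Finset.range n, ∑ x_1 ∈ Finset.range x, ∑ x_2 ∈ Finset.range x_1,
            (t ^ x_2) ⊗ₜ[ZMod p] ((t ^ x_1) ⊗ₜ[ZMod p] ((t - 1) * t ^ x))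
        = ∑ x ∈ Finset.range n, ∑ x_1 ∈ Finset.range x, ∑ x_2 ∈ Finset.range x_1,
            ((t ^ x_2) ⊗ₜ[ZMod p] ((t ^ x_1) ⊗ₜ[ZMod p] (t ^ (x+1)))
              - (t ^ x_2) ⊗ₜ[ZMod p] ((t ^ x_1) ⊗ₜ[ZMod p] (t ^ x))) := by
          refine Finset.sum_congr rfl fun k _ => Finset.sum_congr rfl fun j _ =>
            Finset.sum_congr rfl fun i _ => ?_
          rw [sub_mul, one_mul, ← pow_succ', TensorProduct.tmul_sub, TensorProduct.tmul_sub]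
      _ = ∑ x ∈ Finset.range n, ∑ x_1 ∈ Finset.range x,
            ((t ^ x_1) ⊗ₜ[ZMod p] ((t ^ x) ⊗ₜ[ZMod p] (1:GA p G))
              - (t ^ x_1) ⊗ₜ[ZMod p] ((t ^ x) ⊗ₜ[ZMod p] (t ^ (x+1)))) := key
      _ = _ := by simp only [sum_sub_GA3 (R := GA3 p G)]
  · -- ooo
    rw [Hel_zero p n G g (fun h => (Nat.not_odd_iff_even.mpr (Odd.add_one ha)) h.1),
        Hel_zero p n G g (fun h => (Nat.not_odd_iff_even.mpr (Odd.add_one hb)) h.2.1),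
        Hel_zero p n G g (fun h => (Nat.not_odd_iff_even.mpr (Odd.add_one hc)) h.2.2),
        Hel_odd p n G g ha hb hc]
    have hc31 : comul3 p G t = t ⊗ₜ[ZMod p] (t ⊗ₜ[ZMod p] t) := by simpa using hc3 1
    simp only [map_zero, smul_zero, add_zero, zero_add]
    rw [coefD, if_pos (Even.add_odd (Odd.add_odd ha hb) hc), ← ht, ← AlgHom.coe_toRingHom, map_sub, map_one, AlgHom.coe_toRingHom, hc31]
    rw [coassocDefect, Δel_oe p n G g ha (hb.add_odd hc), Δel_e p n G g _ (Odd.add_odd ha hb)]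
    simp only [Δmap, Δel_oo p n G g ha hb, Δel_oo p n G g hb hc, map_sum,
      TensorProduct.map_tmul, TensorProduct.sum_tmul, TensorProduct.tmul_sum,
      LinearMap.mulLeft_apply, LinearMap.id_coe, id_eq, LinearMap.coe_comp,
      Function.comp_apply, LinearMap.mulRight_apply, AlgHom.toLinearMap_apply, hc2, hc21, map_one,
      Algebra.TensorProduct.tmul_mul_tmul, Algebra.TensorProduct.one_def,
      TensorProduct.assoc_tmul, mul_one, one_mul, ← ht]
    rw [GA3_sub_mul]
    simp only [GA3_mul_sum p G, GA2_mul_sum p G, TensorProduct.tmul_sum, TensorProduct.sum_tmul,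
      map_sum, TensorProduct.assoc_tmul,
      Algebra.TensorProduct.tmul_mul_tmul, one_mul, ← pow_succ']
    have hZ : ((1:GA p G) ⊗ₜ[ZMod p] ((1:GA p G) ⊗ₜ[ZMod p] t)) ^ n = (1 : GA3 p G) := by
      simp only [Algebra.TensorProduct.tmul_pow, one_pow, htn, ← Algebra.TensorProduct.one_def]
    have key := L_ooo (R := GA3 p G) n (t ⊗ₜ[ZMod p] ((1:GA p G) ⊗ₜ[ZMod p] (1:GA p G)))
      ((1:GA p G) ⊗ₜ[ZMod p] (t ⊗ₜ[ZMod p] (1:GA p G)))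
      ((1:GA p G) ⊗ₜ[ZMod p] ((1:GA p G) ⊗ₜ[ZMod p] t)) hZ
    simp only [Algebra.TensorProduct.tmul_pow, one_pow,
      Algebra.TensorProduct.tmul_mul_tmul, mul_one, one_mul] at key
    simp only [sum_sub_GA3 (R := GA3 p G)] at key
    exact key
end

section
/- Let n = a + b + c with a, b, c ≥ 1 and consider, over the group algebra of a cyclic group of order n' generated by g, the expression (Δ⊗1)Δ(e_n) − (1⊗Δ)Δ(e_n) projected to P_a ⊗ P_b ⊗ P_c, where Δ is the Cartan–Eilenberg diagonal. This projection equals: Σ_{0≤i<j<n'}(g^i e_a ⊗ g^j e_b ⊗ e_c − e_a ⊗ g^{i+1} e_b ⊗ g^{j+1} e_c) if a, b, c are all odd; Σ_{0≤i<j<n'} g^i e_a ⊗ g^j e_b ⊗ (1−g^{j+1}) e_c if exactly a and b are odd; Σ_{0≤i<j<n'} g^i e_a ⊗ (g^{i+1}−g^j) e_b ⊗ g^j e_c if exactly a and c are odd; Σ_{0≤i<j<n'} (g^i−1) e_a ⊗ g^i e_b ⊗ g^j e_c if exactly b and c are odd; and 0 otherwise. -/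
open Finset TensorProduct

noncomputable section

variable (p n : ℕ) (G : Type) [CommGroup G] (g : G)

/-- The explicit value of the coassociativity defect `(Δ⊗1)Δ − (1⊗Δ)Δ` at
`P_a ⊗ P_b ⊗ P_c` on `e_(a+b+c)`, according to the parities of `a`, `b`, `c`. -/
def rhsFive (a b c : ℕ) : GA3 p G :=
  if Odd a ∧ Odd b ∧ Odd c then
    ∑ j ∈ Finset.range n, ∑ i ∈ Finset.range j,
      (((ofg p G g) ^ i) ⊗ₜ (((ofg p G g) ^ j) ⊗ₜ (1 : GA p G))
        - (1 : GA p G) ⊗ₜ (((ofg p G g) ^ (i + 1)) ⊗ₜ ((ofg p G g) ^ (j + 1))))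
  else if Odd a ∧ Odd b then
    ∑ j ∈ Finset.range n, ∑ i ∈ Finset.range j,
      ((ofg p G g) ^ i) ⊗ₜ (((ofg p G g) ^ j) ⊗ₜ ((1 : GA p G) - (ofg p G g) ^ (j + 1)))
  else if Odd a ∧ Odd c then
    ∑ j ∈ Finset.range n, ∑ i ∈ Finset.range j,
      ((ofg p G g) ^ i) ⊗ₜ ((((ofg p G g) ^ (i + 1)) - (ofg p G g) ^ j) ⊗ₜ ((ofg p G g) ^ j))
  else if Odd b ∧ Odd c then
    ∑ j ∈ Finset.range n, ∑ i ∈ Finset.range j,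
      (((ofg p G g) ^ i) - (1 : GA p G)) ⊗ₜ (((ofg p G g) ^ i) ⊗ₜ ((ofg p G g) ^ j))
  else 0

end


section stmt5helpers
variable (p n : ℕ) (G : Type) [CommGroup G] (g : G)

private lemma sum_sub_sum' {M : Type*} [AddCommGroup M] (n : ℕ) (f h : ℕ → ℕ → M) :
    ∑ j ∈ Finset.range n, ∑ i ∈ Finset.range j, f j i
      - ∑ j ∈ Finset.range n, ∑ i ∈ Finset.range j, h j i
    = ∑ j ∈ Finset.range n, ∑ i ∈ Finset.range j, (f j i - h j i) := by
  simp [Finset.sum_sub_distrib]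

private lemma comul2_pow (k : ℕ) :
    comul2 p G ((ofg p G g) ^ k) = ((ofg p G g) ^ k) ⊗ₜ ((ofg p G g) ^ k) := by
  rw [map_pow]
  have : comul2 p G (ofg p G g) = (ofg p G g) ⊗ₜ (ofg p G g) := by
    simp [comul2, ofg, MonoidAlgebra.lift_of]
  rw [this, Algebra.TensorProduct.tmul_pow]

private lemma Δmap_pow (a b k : ℕ) :
    Δmap p n G g a b ((ofg p G g) ^ k)
      = (((ofg p G g)^k) ⊗ₜ ((ofg p G g)^k)) * Δel p n G g a b := by
  simp [Δmap, comul2_pow]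

private lemma Δmap_one (a b : ℕ) : Δmap p n G g a b 1 = Δel p n G g a b := by
  have := Δmap_pow p n G g a b 0
  simpa [← Algebra.TensorProduct.one_def] using this

private lemma Δmap_g (a b : ℕ) :
    Δmap p n G g a b (ofg p G g)
      = ((ofg p G g) ⊗ₜ (ofg p G g)) * Δel p n G g a b := by
  have := Δmap_pow p n G g a b 1
  simpa using this

private lemma Δel_even (a b : ℕ) (ha : Even a) : Δel p n G g a b = 1 ⊗ₜ 1 := by
  simp [Δel, ha]

private lemma Δel_odd_even (a b : ℕ) (ha : Odd a) (hb : Even b) :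
    Δel p n G g a b = 1 ⊗ₜ (ofg p G g) := by
  simp [Δel, Nat.not_even_iff_odd.2 ha, hb]

private lemma Δel_odd_odd (a b : ℕ) (ha : Odd a) (hb : Odd b) :
    Δel p n G g a b = ∑ j ∈ Finset.range n, ∑ i ∈ Finset.range j,
      ((ofg p G g) ^ i) ⊗ₜ ((ofg p G g) ^ j) := by
  simp [Δel, Nat.not_even_iff_odd.2 ha, Nat.not_even_iff_odd.2 hb]

end stmt5helpers

set_option synthInstance.maxHeartbeats 1000000 in
/-- Let `n = a + b + c` with `a, b, c ≥ 1` and consider, over the group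
algebra of a cyclic group of order `n'` generated by `g`, the component at
`P_a ⊗ P_b ⊗ P_c` of `(Δ⊗1)Δ(e_n) − (1⊗Δ)Δ(e_n)`, where `Δ` is the Cartan–Eilenberg
diagonal.  This component equals the explicit expression `rhsFive`, determined by the
parities of `a`, `b` and `c` (here `n'` plays the role of the group order and the
projection to `P_a ⊗ P_b ⊗ P_c` is expressed by coefficients in `F_p[G]⊗F_p[G]⊗F_p[G]`
relative to `e_a ⊗ e_b ⊗ e_c`). -/
theorem stmt5 (p n' : ℕ) (hp : p.Prime) (hn : 0 < n') (G : Type) [CommGroup G] (g : G)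
    (hord : orderOf g = n') (hgen : ∀ x : G, x ∈ Subgroup.zpowers g) :
    ∀ a b c : ℕ, 1 ≤ a → 1 ≤ b → 1 ≤ c →
      coassocDefect p n' G g a b c = rhsFive p n' G g a b c := by
  intro a b c _ _ _
  rcases Nat.even_or_odd a with ha | ha <;> rcases Nat.even_or_odd b with hb | hb <;>
    rcases Nat.even_or_odd c with hc | hc
  -- E E E
  · rw [coassocDefect, rhsFive,
      if_neg (fun h => Nat.not_even_iff_odd.2 h.1 ha),
      if_neg (fun h => Nat.not_even_iff_odd.2 h.1 ha),
      if_neg (fun h => Nat.not_even_iff_odd.2 h.1 ha),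
      if_neg (fun h => Nat.not_even_iff_odd.2 h.1 hb),
      Δel_even p n' G g _ c (ha.add hb), Δel_even p n' G g a _ ha]
    simp only [TensorProduct.map_tmul, Δmap_one, LinearMap.id_coe, id_eq,
      Δel_even p n' G g a b ha, Δel_even p n' G g b c hb,
      TensorProduct.assoc_tmul, sub_self]
  -- E E O
  · rw [coassocDefect, rhsFive,
      if_neg (fun h => Nat.not_even_iff_odd.2 h.1 ha),
      if_neg (fun h => Nat.not_even_iff_odd.2 h.1 ha),
      if_neg (fun h => Nat.not_even_iff_odd.2 h.1 ha),
      if_neg (fun h => Nat.not_even_iff_odd.2 h.1 hb),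
      Δel_even p n' G g _ c (ha.add hb), Δel_even p n' G g a _ ha]
    simp only [TensorProduct.map_tmul, Δmap_one, LinearMap.id_coe, id_eq,
      Δel_even p n' G g a b ha, Δel_even p n' G g b c hb,
      TensorProduct.assoc_tmul, sub_self]
  -- E O E
  · rw [coassocDefect, rhsFive,
      if_neg (fun h => Nat.not_even_iff_odd.2 h.1 ha),
      if_neg (fun h => Nat.not_even_iff_odd.2 h.1 ha),
      if_neg (fun h => Nat.not_even_iff_odd.2 h.1 ha),
      if_neg (fun h => Nat.not_even_iff_odd.2 h.2 hc),
      Δel_odd_even p n' G g _ c (ha.add_odd hb) hc, Δel_even p n' G g a _ ha]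
    simp only [TensorProduct.map_tmul, Δmap_one, LinearMap.id_coe, id_eq,
      Δel_even p n' G g a b ha, Δel_odd_even p n' G g b c hb hc,
      TensorProduct.assoc_tmul, sub_self]
  -- E O O
  · rw [coassocDefect, rhsFive,
      if_neg (fun h => Nat.not_even_iff_odd.2 h.1 ha),
      if_neg (fun h => Nat.not_even_iff_odd.2 h.1 ha),
      if_neg (fun h => Nat.not_even_iff_odd.2 h.1 ha),
      if_pos ⟨hb, hc⟩,
      Δel_odd_odd p n' G g _ c (ha.add_odd hb) hc, Δel_even p n' G g a _ ha]
    simp only [map_sum, TensorProduct.map_tmul, Δmap_pow, Δmap_one,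
      LinearMap.id_coe, id_eq,
      Δel_even p n' G g a b ha, Δel_odd_odd p n' G g b c hb hc,
      Algebra.TensorProduct.tmul_mul_tmul, one_mul, mul_one,
      TensorProduct.sum_tmul, TensorProduct.tmul_sum, TensorProduct.assoc_tmul,
      TensorProduct.sub_tmul]
    exact sum_sub_sum' (M := GA3 p G) n' _ _
  -- O E E
  · rw [coassocDefect, rhsFive,
      if_neg (fun h => Nat.not_even_iff_odd.2 h.2.1 hb),
      if_neg (fun h => Nat.not_even_iff_odd.2 h.2 hb),
      if_neg (fun h => Nat.not_even_iff_odd.2 h.2 hc),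
      if_neg (fun h => Nat.not_even_iff_odd.2 h.1 hb),
      Δel_odd_even p n' G g _ c (ha.add_even hb) hc,
      Δel_odd_even p n' G g a _ ha (hb.add hc)]
    simp only [TensorProduct.map_tmul, Δmap_one, Δmap_g, LinearMap.id_coe, id_eq,
      Δel_odd_even p n' G g a b ha hb, Δel_even p n' G g b c hb,
      Algebra.TensorProduct.tmul_mul_tmul, one_mul, mul_one,
      TensorProduct.assoc_tmul, sub_self]
  -- O E O
  · rw [coassocDefect, rhsFive,
      if_neg (fun h => Nat.not_even_iff_odd.2 h.2.1 hb),
      if_neg (fun h => Nat.not_even_iff_odd.2 h.2 hb),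
      if_pos ⟨ha, hc⟩,
      Δel_odd_odd p n' G g _ c (ha.add_even hb) hc,
      Δel_odd_odd p n' G g a _ ha (hb.add_odd hc)]
    simp only [map_sum, TensorProduct.map_tmul, Δmap_pow, LinearMap.id_coe, id_eq,
      Δel_odd_even p n' G g a b ha hb, Δel_even p n' G g b c hb,
      Algebra.TensorProduct.tmul_mul_tmul, one_mul, mul_one, ← pow_succ,
      TensorProduct.sum_tmul, TensorProduct.tmul_sum, TensorProduct.assoc_tmul,
      TensorProduct.sub_tmul, TensorProduct.tmul_sub]
    exact sum_sub_sum' (M := GA3 p G) n' _ _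
  -- O O E
  · rw [coassocDefect, rhsFive,
      if_neg (fun h => Nat.not_even_iff_odd.2 h.2.2 hc),
      if_pos ⟨ha, hb⟩,
      Δel_even p n' G g _ c (ha.add_odd hb),
      Δel_odd_odd p n' G g a _ ha (hb.add_even hc)]
    simp only [map_sum, TensorProduct.map_tmul, Δmap_pow, Δmap_one,
      LinearMap.id_coe, id_eq,
      Δel_odd_odd p n' G g a b ha hb, Δel_odd_even p n' G g b c hb hc,
      Algebra.TensorProduct.tmul_mul_tmul, one_mul, mul_one, ← pow_succ,
      TensorProduct.sum_tmul, TensorProduct.tmul_sum, TensorProduct.assoc_tmul,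
      TensorProduct.tmul_sub]
    exact sum_sub_sum' (M := GA3 p G) n' _ _
  -- O O O
  · rw [coassocDefect, rhsFive, if_pos ⟨ha, hb, hc⟩,
      Δel_even p n' G g _ c (ha.add_odd hb),
      Δel_odd_even p n' G g a _ ha (hb.add_odd hc)]
    simp only [TensorProduct.map_tmul, Δmap_one, Δmap_g, LinearMap.id_coe, id_eq,
      Δel_odd_odd p n' G g a b ha hb, Δel_odd_odd p n' G g b c hb hc,
      Finset.mul_sum, Algebra.TensorProduct.tmul_mul_tmul, one_mul, mul_one,
      TensorProduct.sum_tmul, TensorProduct.tmul_sum, TensorProduct.assoc_tmul,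
      map_sum, ← pow_succ']
    exact sum_sub_sum' (M := GA3 p G) n' _ _
end
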